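/- For every natural number n, the number of ordered pairs (T1,T2) of ternary trees with a total of n nodes equals C(3n+1,n)/(n+1). -/
import Mathlib


/-- A ternary tree: empty, or a root with left, middle and right subtrees. -/
inductive TernaryTree : Type
  | leaf : TernaryTree
  | node : TernaryTree → TernaryTree → TernaryTree → TernaryTree

/-- Number of nodes of a ternary tree. -/
def TernaryTree.size : TernaryTree → ℕ
  | .leaf => 0
  | .node l m r => 1 + l.size + m.size + r.size

/-- All nodes of `t` have nonnegative abscissa, when the root of `t` has abscissa `j`. -/
def TernaryTree.NonnegAbs : TernaryTree → ℤ → Prop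
  | .leaf, _ => True
  | .node l m r, j =>
      0 ≤ j ∧ l.NonnegAbs (j + 1) ∧ m.NonnegAbs j ∧ r.NonnegAbs (j - 1)

/-- A left ternary tree: nonempty with all abscissas nonnegative (root at abscissa 0). -/
def TernaryTree.IsLeft (t : TernaryTree) : Prop :=
  t ≠ .leaf ∧ t.NonnegAbs 0

/-- Number of nodes of odd abscissa, when the root has abscissa `j`. -/
def TernaryTree.oddCount : TernaryTree → ℤ → ℕ
  | .leaf, _ => 0
  | .node l m r, j =>
      (if Odd j then 1 else 0) + l.oddCount (j + 1) + m.oddCount j + r.oddCount (j - 1)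

namespace TTAux

def wt (b : Bool) : ℤ := if b then 2 else -1

def wsum (w : List Bool) : ℤ := (w.map wt).sum

@[simp] lemma wsum_nil : wsum [] = 0 := rfl

@[simp] lemma wt_true : wt true = 2 := rfl

@[simp] lemma wt_false : wt false = -1 := rfl

@[simp] lemma wsum_cons (b : Bool) (w : List Bool) : wsum (b :: w) = wt b + wsum w := by
  simp [wsum]

@[simp] lemma wsum_append (x y : List Bool) : wsum (x ++ y) = wsum x + wsum y := by
  simp [wsum]

lemma wsum_take_append (x y : List Bool) (j : ℕ) :
    wsum ((x ++ y).take j) = wsum (x.take j) + wsum (y.take (j - x.length)) := by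
  rw [List.take_append, wsum_append]

lemma wsum_take_of_le (w : List Bool) {j : ℕ} (h : w.length ≤ j) : wsum (w.take j) = wsum w := by
  rw [List.take_of_length_le h]

lemma wsum_take_succ_ge (w : List Bool) (k : ℕ) :
    wsum (w.take k) - 1 ≤ wsum (w.take (k + 1)) := by
  rw [List.take_succ, wsum_append]
  rcases h : w[k]? with _ | b
  · simp [h]
  · cases b <;> simp [h, wt] <;> omega

lemma wsum_eq_count (w : List Bool) : wsum w = 3 * (w.count true : ℤ) - w.length := by
  induction w with
  | nil => simp
  | cons b t ih =>
    cases b <;> simp [List.count_cons, ih, wt] <;> ring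

/-- first-hit lemma: prefix sums start at 0, descend by at most 1 per step. -/
lemma first_hit (w : List Bool) (c : ℤ) (hc : c < 0) (j0 : ℕ) (hj0 : wsum (w.take j0) ≤ c) :
    ∃ k, 0 < k ∧ k ≤ j0 ∧ wsum (w.take k) = c ∧ ∀ j < k, c < wsum (w.take j) := by
  have hex : ∃ k, wsum (w.take k) ≤ c := ⟨j0, hj0⟩
  classical
  set k := Nat.find hex with hk
  have hk1 : wsum (w.take k) ≤ c := Nat.find_spec hex
  have hmin : ∀ j < k, c < wsum (w.take j) := fun j hj => by
    have := Nat.find_min hex hj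
    omega
  have hkpos : 0 < k := by
    rcases Nat.eq_zero_or_pos k with h0 | h
    · exfalso; rw [h0] at hk1; simp at hk1; omega
    · exact h
  have hkj0 : k ≤ j0 := Nat.find_le hj0
  refine ⟨k, hkpos, hkj0, ?_, hmin⟩
  have h1 := wsum_take_succ_ge w (k - 1)
  have hk2 : c < wsum (w.take (k - 1)) := hmin _ (by omega)
  have he : k - 1 + 1 = k := by omega
  rw [he] at h1
  omega

end TTAux

namespace TTAux

def Bal1 (w : List Bool) : Prop := wsum w = -1 ∧ ∀ k < w.length, 0 ≤ wsum (w.take k)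

def Good (w : List Bool) : Prop := wsum w = -2 ∧ ∀ k < w.length, -1 ≤ wsum (w.take k)

instance : DecidablePred Good := fun w => by unfold Good; infer_instance

def code : TernaryTree → List Bool
  | .leaf => [false]
  | .node l m r => true :: (code l ++ code m ++ code r)

@[simp] lemma length_code (t : TernaryTree) : (code t).length = 3 * t.size + 1 := by
  induction t with
  | leaf => simp [code, TernaryTree.size]
  | node l m r ihl ihm ihr => simp [code, TernaryTree.size, ihl, ihm, ihr]; ring

@[simp] lemma wsum_code (t : TernaryTree) : wsum (code t) = -1 := by
  induction t with
  | leaf => simp [code, wt]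
  | node l m r ihl ihm ihr => simp [code, wt, ihl, ihm, ihr]

lemma bal1_take_ge {x : List Bool} (hx : Bal1 x) (j : ℕ) : -1 ≤ wsum (x.take j) := by
  rcases lt_or_ge j x.length with h | h
  · have := hx.2 j h; omega
  · rw [wsum_take_of_le x h, hx.1]

lemma code_bal1 (t : TernaryTree) : Bal1 (code t) := by
  induction t with
  | leaf =>
    refine ⟨by simp [code, wt], fun k hk => ?_⟩
    simp [code] at hk
    subst hk
    simp
  | node l m r ihl ihm ihr =>
    refine ⟨by simp [code, wt, ihl.1, ihm.1, ihr.1], fun k hk => ?_⟩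
    cases k with
    | zero => simp
    | succ j =>
      have e1 := length_code l
      have e2 := length_code m
      have e3 := length_code r
      have hj : j < (code l).length + (code m).length + (code r).length := by
        simp [code] at hk; omega
      show 0 ≤ wsum ((true :: ((code l ++ code m) ++ code r)).take (j + 1))
      rw [List.take_succ_cons, wsum_cons, wsum_take_append, wsum_take_append,
        List.length_append]
      have hA := bal1_take_ge ihl j
      have hB := bal1_take_ge ihm (j - (code l).length)
      have hC := bal1_take_ge ihr (j - ((code l).length + (code m).length))
      rcases lt_or_ge j (code l).length with h1 | h1
      · have hBe : wsum ((code m).take (j - (code l).length)) = 0 := by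
          rw [Nat.sub_eq_zero_of_le h1.le]; simp
        have hCe : wsum ((code r).take (j - ((code l).length + (code m).length))) = 0 := by
          rw [Nat.sub_eq_zero_of_le (by omega)]; simp
        have := ihl.2 j h1
        rw [hBe, hCe, wt_true]
        omega
      · have hAe : wsum ((code l).take j) = -1 := by
          rw [wsum_take_of_le _ h1, wsum_code]
        rcases lt_or_ge (j - (code l).length) (code m).length with h2 | h2
        · have hCe : wsum ((code r).take (j - ((code l).length + (code m).length))) = 0 := by
            rw [Nat.sub_eq_zero_of_le (by omega)]; simp
          have := ihm.2 _ h2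
          rw [hAe, hCe, wt_true]
          omega
        · have hBe : wsum ((code m).take (j - (code l).length)) = -1 := by
            rw [wsum_take_of_le _ h2, wsum_code]
          have h3 : j - ((code l).length + (code m).length) < (code r).length := by omega
          have := ihr.2 _ h3
          rw [hAe, hBe, wt_true]
          omega

lemma code_cancel : ∀ (t u : TernaryTree) (a b : List Bool),
    code t ++ a = code u ++ b → t = u ∧ a = b := by
  intro t
  induction t with
  | leaf =>
    intro u a b h
    cases u with
    | leaf => simpa [code] using h
    | node l m r => simp [code] at h
  | node l m r ihl ihm ihr =>
    intro u a b h
    cases u with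
    | leaf => simp [code] at h
    | node l' m' r' =>
      simp only [code, List.cons_append, List.cons.injEq, List.append_assoc] at h
      obtain ⟨-, h⟩ := h
      obtain ⟨h1, h⟩ := ihl l' _ _ h
      obtain ⟨h2, h⟩ := ihm m' _ _ h
      obtain ⟨h3, h4⟩ := ihr r' _ _ h
      exact ⟨by rw [h1, h2, h3], h4⟩

lemma wsum_take_drop (w : List Bool) (k j : ℕ) :
    wsum ((w.drop k).take j) = wsum (w.take (k + j)) - wsum (w.take k) := by
  rw [List.take_add, wsum_append]
  ring

lemma bal1_code : ∀ (N : ℕ) (w : List Bool), w.length ≤ N → Bal1 w → ∃ t, code t = w := by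
  intro N
  induction N with
  | zero =>
    intro w hw hb
    have h : w = [] := List.length_eq_zero_iff.mp (by omega)
    subst h; simp [Bal1] at hb
  | succ N ih =>
    intro w hw hb
    match w with
    | [] => simp [Bal1] at hb
    | false :: rest =>
      match rest with
      | [] => exact ⟨.leaf, rfl⟩
      | x :: xs =>
        exfalso
        have := hb.2 1 (by simp)
        simp [wt] at this
    | true :: rest =>
      have hsum : wsum rest = -3 := by have := hb.1; simp [wt] at this; omega
      have hpre : ∀ j < rest.length, -2 ≤ wsum (rest.take j) := by
        intro j hj
        have := hb.2 (j + 1) (by simp; omega)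
        simp [wt] at this
        omega
      -- split rest at first hit of -1
      obtain ⟨k1, hk1pos, hk1le, hk1eq, hk1min⟩ := first_hit rest (-1) (by norm_num)
        rest.length (by rw [wsum_take_of_le rest le_rfl]; omega)
      set a := rest.take k1 with ha
      set b := rest.drop k1 with hbdef
      have hba : Bal1 a := by
        refine ⟨hk1eq, fun j hj => ?_⟩
        have hj' : j < k1 := by rw [ha, List.length_take] at hj; omega
        rw [ha, List.take_take, min_eq_left hj'.le]
        have := hk1min j hj'
        omega
      have hsb : wsum b = -2 := by
        have : wsum a + wsum b = wsum rest := by rw [ha, hbdef, ← wsum_append,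
          List.take_append_drop]
        omega
      have hpb : ∀ j < b.length, -1 ≤ wsum (b.take j) := by
        intro j hj
        rw [hbdef, wsum_take_drop]
        have h1 : k1 + j < rest.length := by
          rw [hbdef, List.length_drop] at hj; omega
        have := hpre (k1 + j) h1
        have hk1eq' : wsum (rest.take k1) = -1 := hk1eq
        omega
      obtain ⟨k2, hk2pos, hk2le, hk2eq, hk2min⟩ := first_hit b (-1) (by norm_num)
        b.length (by rw [wsum_take_of_le b le_rfl]; omega)
      set b1 := b.take k2 with hb1
      set b2 := b.drop k2 with hb2
      have hbb1 : Bal1 b1 := by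
        refine ⟨hk2eq, fun j hj => ?_⟩
        have hj' : j < k2 := by rw [hb1, List.length_take] at hj; omega
        rw [hb1, List.take_take, min_eq_left hj'.le]
        have := hk2min j hj'
        omega
      have hbb2 : Bal1 b2 := by
        constructor
        · have : wsum b1 + wsum b2 = wsum b := by
            rw [hb1, hb2, ← wsum_append, List.take_append_drop]
          omega
        · intro j hj
          rw [hb2, wsum_take_drop]
          have h1 : k2 + j < b.length := by
            rw [hb2, List.length_drop] at hj; omega
          have := hpb (k2 + j) h1
          have : wsum (b.take k2) = -1 := hk2eq
          omega
      have hlen : a.length < N + 1 ∧ b1.length < N + 1 ∧ b2.length < N + 1 := by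
        have h1 : a.length = k1 := by
          rw [ha, List.length_take]; omega
        have h2 : b.length = rest.length - k1 := by rw [hbdef, List.length_drop]
        have h3 : b1.length = k2 := by rw [hb1, List.length_take]; omega
        have h4 : b2.length = b.length - k2 := by rw [hb2, List.length_drop]
        have hwl : rest.length + 1 ≤ N + 1 := by simpa using hw
        -- b2 nonempty? need lengths ≤ N
        omega
      obtain ⟨t1, ht1⟩ := ih a (by omega) hba
      obtain ⟨t2, ht2⟩ := ih b1 (by omega) hbb1
      obtain ⟨t3, ht3⟩ := ih b2 (by omega) hbb2
      refine ⟨.node t1 t2 t3, ?_⟩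
      have hb12 : b1 ++ b2 = b := by rw [hb1, hb2, List.take_append_drop]
      have hab : a ++ b = rest := by rw [ha, hbdef, List.take_append_drop]
      simp only [code, ht1, ht2, ht3, List.append_assoc, hb12, hab]

end TTAux

namespace TTAux

lemma good_code (t1 t2 : TernaryTree) : Good (code t1 ++ code t2) := by
  refine ⟨by simp, fun k hk => ?_⟩
  rw [wsum_take_append]
  have h1 := bal1_take_ge (code_bal1 t1) k
  rcases le_or_gt k (code t1).length with h | h
  · rw [Nat.sub_eq_zero_of_le h]
    simpa using h1
  · have h2 : k - (code t1).length < (code t2).length := by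
      have e1 := length_code t1; have e2 := length_code t2
      rw [List.length_append] at hk; omega
    have := (code_bal1 t2).2 _ h2
    have h3 : wsum ((code t1).take k) = -1 := by
      rw [wsum_take_of_le _ h.le, wsum_code]
    omega

lemma good_split {w : List Bool} (h : Good w) : ∃ t1 t2, w = code t1 ++ code t2 := by
  obtain ⟨k, hkpos, hkle, hkeq, hkmin⟩ := first_hit w (-1) (by norm_num) w.length
    (by rw [wsum_take_of_le _ le_rfl]; have := h.1; omega)
  have hba : Bal1 (w.take k) := by
    refine ⟨hkeq, fun j hj => ?_⟩
    have hj' : j < k := by rw [List.length_take] at hj; omega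
    rw [List.take_take, min_eq_left hj'.le]
    have := hkmin j hj'
    omega
  have hbb : Bal1 (w.drop k) := by
    constructor
    · have h2 : wsum (w.take k) + wsum (w.drop k) = wsum w := by
        rw [← wsum_append, List.take_append_drop]
      have := h.1
      omega
    · intro j hj
      rw [wsum_take_drop]
      have h1 : k + j < w.length := by rw [List.length_drop] at hj; omega
      have := h.2 (k + j) h1
      omega
  obtain ⟨t1, ht1⟩ := bal1_code (w.take k).length _ le_rfl hba
  obtain ⟨t2, ht2⟩ := bal1_code (w.drop k).length _ le_rfl hbb
  exact ⟨t1, t2, by rw [ht1, ht2, List.take_append_drop]⟩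

/-- The encoding of pairs as good words, as a bijection. -/
lemma card_pairs_eq_card_goodwords (n : ℕ) :
    Nat.card {p : TernaryTree × TernaryTree // p.1.size + p.2.size = n} =
      Nat.card {w : List Bool // Good w ∧ w.length = 3 * n + 2} := by
  apply Nat.card_congr
  refine Equiv.ofBijective (fun p => ⟨code p.1.1 ++ code p.1.2, good_code _ _, ?_⟩) ⟨?_, ?_⟩
  · have := p.2
    simp [List.length_append]
    omega
  · rintro ⟨⟨t1, t2⟩, h⟩ ⟨⟨u1, u2⟩, h'⟩ he
    simp only [Subtype.mk.injEq] at he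
    obtain ⟨e1, e2⟩ := code_cancel t1 u1 _ _ he
    obtain ⟨e3, -⟩ := code_cancel t2 u2 [] [] (by simpa using e2)
    apply Subtype.ext
    simp [e1, e3]
  · rintro ⟨w, hg, hl⟩
    obtain ⟨t1, t2, rfl⟩ := good_split hg
    have hs : t1.size + t2.size = n := by
      simp [List.length_append] at hl
      omega
    exact ⟨⟨(t1, t2), hs⟩, rfl⟩

end TTAux

namespace TTAux

lemma wsum_rotate (l : List Bool) (n : ℕ) : wsum (l.rotate n) = wsum l :=
  ((l.rotate_perm n).map wt).sum_eq

lemma cycle_core (w : List Bool) (hw : wsum w = -2) :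
    ((Finset.range w.length).filter (fun i => Good (w.rotate i))).card = 2 := by
  classical
  set L := w.length with hL
  have hsL : ∀ j, L ≤ j → wsum (w.take j) = -2 := fun j hj => by
    rw [wsum_take_of_le _ hj, hw]
  have hLpos : 0 < L := by
    by_contra h
    have : w = [] := List.length_eq_zero_iff.mp (by omega)
    rw [this] at hw; simp at hw
  have hrot : ∀ i k, i ≤ L → k ≤ L →
      wsum ((w.rotate i).take k) =
        wsum (w.take (i + k)) - wsum (w.take i) + wsum (w.take (k - (L - i))) := by
    intro i k hi hk
    rw [List.rotate_eq_drop_append_take hi, wsum_take_append, wsum_take_drop,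
      List.length_drop, List.take_take, min_eq_left (by omega)]
  obtain ⟨jm, hjmmem, hjmin⟩ := Finset.exists_min_image (Finset.range (L + 1))
    (fun k => wsum (w.take k)) ⟨L, by simp⟩
  simp only [Finset.mem_range] at hjmmem
  set m := wsum (w.take jm) with hm
  have hjmL : jm ≤ L := by omega
  have hmin : ∀ j, j ≤ L → m ≤ wsum (w.take j) := fun j hj =>
    hjmin j (Finset.mem_range.mpr (by omega))
  have hm2 : m ≤ -2 := by have := hmin L le_rfl; rw [hsL L le_rfl] at this; exact this
  obtain ⟨i1, hi1pos, hi1le, hi1eq, hi1min⟩ := first_hit w m (by omega) jm hm.ge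
  have hi1L : i1 ≤ L := le_trans hi1le hjmL
  obtain ⟨i2, hi2pos, hi2le, hi2eq, hi2min⟩ :=
    first_hit w (m + 1) (by omega) i1 (by rw [hi1eq]; omega)
  have hi2lt : i2 < i1 := lt_of_le_of_ne hi2le fun h => by rw [h, hi1eq] at hi2eq; omega
  have hrotgood : ∀ i, i < L → (Good (w.rotate i) ↔ ∀ k, k < L →
      -1 ≤ wsum (w.take (i + k)) - wsum (w.take i) + wsum (w.take (k - (L - i)))) := by
    intro i hi
    constructor
    · intro hg k hk
      have h2 := hg.2 k (by rw [List.length_rotate]; omega)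
      rw [hrot i k hi.le hk.le] at h2
      exact h2
    · intro h
      refine ⟨by rw [wsum_rotate]; exact hw, fun k hk => ?_⟩
      rw [List.length_rotate] at hk
      rw [hrot i k hi.le hk.le]
      exact h k hk
  -- validity of i2
  have hvalid2 : Good (w.rotate i2) := by
    rw [hrotgood i2 (by omega)]
    intro k hk
    rcases le_or_gt (i2 + k) L with hc | hc
    · have hz : k - (L - i2) = 0 := by omega
      rw [hz]
      have := hmin (i2 + k) hc
      rw [hi2eq]
      simp
      omega
    · have hz : wsum (w.take (i2 + k)) = -2 := hsL _ (by omega)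
      have hj : k - (L - i2) < i2 := by omega
      have := hi2min _ hj
      rw [hz, hi2eq]
      omega
  -- validity of i1 % L
  have hvalid1 : Good (w.rotate (i1 % L)) := by
    rcases lt_or_ge i1 L with h1 | h1
    · rw [Nat.mod_eq_of_lt h1, hrotgood i1 h1]
      intro k hk
      rcases le_or_gt (i1 + k) L with hc | hc
      · have hz : k - (L - i1) = 0 := by omega
        rw [hz]
        have := hmin (i1 + k) hc
        rw [hi1eq]
        simp
        omega
      · have hz : wsum (w.take (i1 + k)) = -2 := hsL _ (by omega)
        have hj : k - (L - i1) < i1 := by omega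
        have := hi1min _ hj
        rw [hz, hi1eq]
        omega
    · have h1' : i1 = L := le_antisymm hi1L h1
      have hmL : m = -2 := by rw [← hi1eq, hsL i1 (by omega)]
      rw [h1', Nat.mod_self, hrotgood 0 hLpos]
      intro k hk
      have hz : k - (L - 0) = 0 := by omega
      rw [hz]
      have := hi1min k (by omega)
      simp
      omega
  -- uniqueness: any valid rotation index is i1 % L or i2
  have huniq : ∀ i, i < L → Good (w.rotate i) → i = i1 % L ∨ i = i2 := by
    intro i hi hg
    rw [hrotgood i hi] at hg
    rcases Nat.eq_zero_or_pos i with rfl | hipos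
    · -- i = 0 : then all prefix sums up to L-1 are ≥ -1, so first hit of m is at L
      left
      have hge : ∀ k, k < L → -1 ≤ wsum (w.take k) := by
        intro k hk
        have := hg k hk
        have hz : k - (L - 0) = 0 := by omega
        rw [hz] at this
        simp at this
        omega
      have h1' : i1 = L := by
        rcases lt_or_ge i1 L with h | h
        · exfalso
          have := hge i1 h
          rw [hi1eq] at this
          omega
        · omega
      rw [h1', Nat.mod_self]
    · -- i ≥ 1
      have hup : ∀ j, i < j → j ≤ L → wsum (w.take i) - 1 ≤ wsum (w.take j) := by
        intro j hij hjL
        have hk : j - i < L := by omega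
        have := hg (j - i) hk
        have he : i + (j - i) = j := by omega
        have hz : j - i - (L - i) = 0 := by omega
        rw [he, hz] at this
        simp at this
        omega
      have hsi : wsum (w.take i) ≤ -1 := by
        have := hup L (by omega) le_rfl
        rw [hsL L le_rfl] at this
        omega
      have hdown : ∀ j, 0 < j → j < i → wsum (w.take i) + 1 ≤ wsum (w.take j) := by
        intro j hj0 hji
        have hk : j + (L - i) < L := by omega
        have := hg (j + (L - i)) hk
        have he : i + (j + (L - i)) = j + L := by omega
        have hz : j + (L - i) - (L - i) = j := by omega
        rw [he, hz, hsL (j + L) (by omega)] at this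
        omega
      have hgem : ∀ j, j ≤ L → wsum (w.take i) - 1 ≤ wsum (w.take j) := by
        intro j hjL
        rcases lt_trichotomy j i with h | rfl | h
        · rcases Nat.eq_zero_or_pos j with rfl | hj0
          · simp; omega
          · have := hdown j hj0 h; omega
        · omega
        · exact hup j h hjL
      have hmlow : wsum (w.take i) - 1 ≤ m := hgem jm hjmL
      have hmup : m ≤ wsum (w.take i) := hmin i hi.le
      rcases eq_or_lt_of_le hmup with hsim | hsim
      · -- s i = m, show i = i1
        left
        have hfirst : ∀ j, j < i → m < wsum (w.take j) := by
          intro j hj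
          rcases Nat.eq_zero_or_pos j with rfl | hj0
          · simp; omega
          · have := hdown j hj0 hj; omega
        have : i = i1 := by
          rcases lt_trichotomy i i1 with h | h | h
          · exfalso; have := hi1min i h; omega
          · exact h
          · exfalso; have := hfirst i1 h; rw [hi1eq] at this; omega
        rw [this, Nat.mod_eq_of_lt (by omega)]
      · -- s i = m + 1, show i = i2
        right
        have hsim' : wsum (w.take i) = m + 1 := by omega
        have hfirst : ∀ j, j < i → m + 1 < wsum (w.take j) := by
          intro j hj
          rcases Nat.eq_zero_or_pos j with rfl | hj0
          · simp; omega
          · have := hdown j hj0 hj; omega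
        rcases lt_trichotomy i i2 with h | h | h
        · exfalso; have := hi2min i h; omega
        · exact h
        · exfalso; have := hfirst i2 h; rw [hi2eq] at this; omega
  have hset : (Finset.range L).filter (fun i => Good (w.rotate i)) = {i1 % L, i2} := by
    ext i
    simp only [Finset.mem_filter, Finset.mem_range, Finset.mem_insert, Finset.mem_singleton]
    constructor
    · rintro ⟨h1, h2⟩
      exact huniq i h1 h2
    · rintro (rfl | rfl)
      · exact ⟨Nat.mod_lt _ hLpos, hvalid1⟩
      · exact ⟨by omega, hvalid2⟩
  rw [hset]
  have hne : i1 % L ≠ i2 := by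
    rcases lt_or_ge i1 L with h | h
    · rw [Nat.mod_eq_of_lt h]; omega
    · have : i1 = L := by omega
      rw [this, Nat.mod_self]; omega
  rw [Finset.card_insert_of_notMem (by simpa using hne), Finset.card_singleton]


end TTAux

namespace TTAux

def wordsF : ℕ → ℕ → Finset (List Bool)
  | 0, 0 => {[]}
  | 0, _ + 1 => ∅
  | L + 1, 0 => (wordsF L 0).image (false :: ·)
  | L + 1, n + 1 => (wordsF L (n + 1)).image (false :: ·) ∪ (wordsF L n).image (true :: ·)

lemma mem_wordsF : ∀ L n (w : List Bool), w ∈ wordsF L n ↔ w.length = L ∧ w.count true = n := by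
  intro L
  induction L with
  | zero =>
    intro n w
    cases n with
    | zero =>
      simp only [wordsF, Finset.mem_singleton]
      constructor
      · rintro rfl; simp
      · rintro ⟨h1, -⟩; exact List.length_eq_zero_iff.mp h1
    | succ k =>
      simp only [wordsF, Finset.notMem_empty, false_iff, not_and]
      intro h1 h2
      have := List.length_eq_zero_iff.mp h1
      subst this
      simp at h2
  | succ L ih =>
    intro n w
    cases n with
    | zero =>
      simp only [wordsF, Finset.mem_image]
      constructor
      · rintro ⟨a, ha, rfl⟩
        have := (ih 0 a).mp ha
        simp [this.1, this.2]
      · rintro ⟨h1, h2⟩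
        match w with
        | [] => simp at h1
        | true :: t => simp [List.count_cons] at h2
        | false :: t =>
          exact ⟨t, (ih 0 t).mpr ⟨by simpa using h1, by simpa [List.count_cons] using h2⟩, rfl⟩
    | succ k =>
      simp only [wordsF, Finset.mem_union, Finset.mem_image]
      constructor
      · rintro (⟨a, ha, rfl⟩ | ⟨a, ha, rfl⟩)
        · have := (ih (k + 1) a).mp ha
          simp [this.1, this.2, List.count_cons]
        · have := (ih k a).mp ha
          simp [this.1, this.2, List.count_cons]
      · rintro ⟨h1, h2⟩
        match w with
        | [] => simp at h1
        | false :: t =>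
          exact Or.inl ⟨t, (ih (k + 1) t).mpr
            ⟨by simpa using h1, by simpa [List.count_cons] using h2⟩, rfl⟩
        | true :: t =>
          exact Or.inr ⟨t, (ih k t).mpr
            ⟨by simpa using h1, by simpa [List.count_cons] using h2⟩, rfl⟩

lemma card_wordsF : ∀ L n, (wordsF L n).card = L.choose n := by
  intro L
  induction L with
  | zero => intro n; cases n <;> simp [wordsF]
  | succ L ih =>
    intro n
    cases n with
    | zero =>
      show ((wordsF L 0).image (false :: ·)).card = _
      rw [Finset.card_image_of_injective _ List.cons_injective, ih]
      simp
    | succ k =>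
      show ((wordsF L (k + 1)).image (false :: ·) ∪ (wordsF L k).image (true :: ·)).card = _
      rw [Finset.card_union_of_disjoint, Finset.card_image_of_injective _ List.cons_injective,
        Finset.card_image_of_injective _ List.cons_injective, ih, ih, Nat.choose_succ_succ]
      · simp only [Nat.succ_eq_add_one]; omega
      · rw [Finset.disjoint_left]
        rintro x hx hx'
        simp only [Finset.mem_image] at hx hx'
        obtain ⟨a, -, rfl⟩ := hx
        obtain ⟨b, -, hb⟩ := hx'
        simp at hb

lemma key_count (n : ℕ) :
    (3 * n + 2) * ((wordsF (3 * n + 2) n).filter Good).card = 2 * (3 * n + 2).choose n := by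
  classical
  set L := 3 * n + 2 with hLdef
  set A := wordsF L n with hA
  set G := A.filter Good with hG
  have hmem : ∀ w ∈ A, w.length = L ∧ w.count true = n := fun w hw => (mem_wordsF L n w).mp hw
  have hws : ∀ w ∈ A, wsum w = -2 := by
    intro w hw
    obtain ⟨h1, h2⟩ := hmem w hw
    rw [wsum_eq_count, h1, h2]
    push_cast
    omega
  have h1 : ∑ w ∈ A, ((Finset.range w.length).filter (fun i => Good (w.rotate i))).card
      = 2 * A.card := by
    rw [Finset.sum_congr rfl (fun w hw => cycle_core w (hws w hw))]
    simp [mul_comm]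
  have h2 : ∑ w ∈ A, ((Finset.range w.length).filter (fun i => Good (w.rotate i))).card
      = G.card * L := by
    rw [← Finset.card_sigma]
    have := Finset.card_product G (Finset.range L)
    rw [← Finset.card_range L, ← Finset.card_product G (Finset.range L)]
    apply Finset.card_bij (fun (p : Σ _ : List Bool, ℕ) _ => (p.1.rotate p.2, p.2))
    · rintro ⟨w, j⟩ hp
      simp only [Finset.mem_sigma, Finset.mem_filter, Finset.mem_range] at hp
      obtain ⟨hwA, hjlen, hgood⟩ := hp
      obtain ⟨hlen, hcnt⟩ := hmem w hwA
      simp only [Finset.mem_product, Finset.mem_range]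
      refine ⟨?_, by omega⟩
      rw [hG, Finset.mem_filter]
      refine ⟨?_, hgood⟩
      rw [hA, mem_wordsF]
      constructor
      · rw [List.length_rotate]; exact hlen
      · rw [(w.rotate_perm j).count_eq]; exact hcnt
    · rintro ⟨w, j⟩ hp ⟨w', j'⟩ hp' he
      simp only [Prod.mk.injEq] at he
      obtain ⟨he1, rfl⟩ := he
      simp only [Finset.mem_sigma, Finset.mem_filter, Finset.mem_range] at hp hp'
      have hl : w.length = L := (hmem w hp.1).1
      have hl' : w'.length = L := (hmem w' hp'.1).1
      have hjlt : j < L := by rw [← hl]; exact hp.2.1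
      have e1 : ∀ u : List Bool, u.length = L → (u.rotate j).rotate (L - j) = u := by
        intro u hu
        rw [List.rotate_rotate]
        have hje : j + (L - j) = L := by omega
        rw [hje, ← hu, List.rotate_length]
      have : w = w' := by rw [← e1 w hl, ← e1 w' hl', he1]
      subst this
      rfl
    · rintro ⟨v, j⟩ hb
      simp only [Finset.mem_product, Finset.mem_range] at hb
      obtain ⟨hvG, hj⟩ := hb
      rw [hG, Finset.mem_filter] at hvG
      obtain ⟨hvA, hvgood⟩ := hvG
      obtain ⟨hlen, hcnt⟩ := hmem v hvA
      have hrr : (v.rotate (L - j)).rotate j = v := by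
        rw [List.rotate_rotate]
        have : L - j + j = L := by omega
        rw [this, ← hlen, List.rotate_length]
      refine ⟨⟨v.rotate (L - j), j⟩, ?_, ?_⟩
      · simp only [Finset.mem_sigma, Finset.mem_filter, Finset.mem_range]
        refine ⟨?_, ?_, ?_⟩
        · rw [hA, mem_wordsF]
          exact ⟨by rw [List.length_rotate]; exact hlen,
            by rw [(v.rotate_perm _).count_eq]; exact hcnt⟩
        · rw [List.length_rotate]; omega
        · rw [hrr]; exact hvgood
      · simp [hrr]
  have hAcard : A.card = L.choose n := card_wordsF L n
  rw [mul_comm, ← h2, h1, hAcard]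

end TTAux

theorem pairs_of_ternary_trees_count (n : ℕ) :
    Nat.card {p : TernaryTree × TernaryTree // p.1.size + p.2.size = n} =
      Nat.choose (3 * n + 1) n / (n + 1) := by
  classical
  rw [TTAux.card_pairs_eq_card_goodwords n]
  set G := (TTAux.wordsF (3 * n + 2) n).filter TTAux.Good with hG
  have hiff : ∀ w : List Bool, (TTAux.Good w ∧ w.length = 3 * n + 2) ↔ w ∈ G := by
    intro w
    rw [hG, Finset.mem_filter, TTAux.mem_wordsF]
    constructor
    · rintro ⟨hg, hl⟩
      refine ⟨⟨hl, ?_⟩, hg⟩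
      have h2 := hg.1
      rw [TTAux.wsum_eq_count, hl] at h2
      push_cast at h2
      omega
    · rintro ⟨⟨hl, -⟩, hg⟩
      exact ⟨hg, hl⟩
  have hcard : Nat.card {w : List Bool // TTAux.Good w ∧ w.length = 3 * n + 2} = G.card := by
    rw [← Nat.card_eq_finsetCard]
    exact Nat.card_congr (Equiv.subtypeEquivRight hiff)
  rw [hcard]
  have key := TTAux.key_count n
  have e1 : (3 * n + 2) * (3 * n + 1).choose n = (3 * n + 2).choose (n + 1) * (n + 1) := by
    rw [show 3 * n + 2 = (3 * n + 1) + 1 by ring]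
    exact Nat.add_one_mul_choose_eq _ _
  have e2 : (3 * n + 2).choose (n + 1) * (n + 1) = (3 * n + 2).choose n * (2 * n + 2) := by
    rw [Nat.choose_succ_right_eq]
    congr 1
    omega
  have hmain : (n + 1) * G.card = (3 * n + 1).choose n := by
    apply Nat.eq_of_mul_eq_mul_left (show 0 < 3 * n + 2 by omega)
    calc (3 * n + 2) * ((n + 1) * G.card)
        = (n + 1) * ((3 * n + 2) * G.card) := by ring
      _ = (n + 1) * (2 * (3 * n + 2).choose n) := by rw [key]
      _ = (3 * n + 2).choose n * (2 * n + 2) := by ring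
      _ = (3 * n + 2).choose (n + 1) * (n + 1) := e2.symm
      _ = (3 * n + 2) * (3 * n + 1).choose n := e1.symm
  symm
  apply Nat.div_eq_of_eq_mul_left (show 0 < n + 1 by omega)
  rw [← hmain]
  ring
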